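/- arXiv:2505.07786 — 4 statements merged into one kernel-verified Lean document; each statement's English description precedes it below -/
import Mathlib

section
/- Let 0 ≤ a_1 ≤ a_2 and 0 ≤ b_1 ≤ b_2 with a_1 ≤ b_1 and a_1 + a_2 ≤ b_1 + b_2. Then the function x ↦ (Γ(x+a_1)Γ(x+a_2)) / (Γ(x+b_1)Γ(x+b_2)) is monotone decreasing on (0, ∞). -/
open Real Filter Finset Topology

/-- Key polynomial inequality: the per-factor comparison. -/
private lemma alzer_key (A₁ A₂ B₁ B₂ x y : ℝ) (hA₁ : 0 ≤ A₁) (hA : A₁ ≤ A₂)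
    (hB : B₁ ≤ B₂) (h1 : A₁ ≤ B₁) (h2 : A₁ + A₂ ≤ B₁ + B₂) (hx : 0 ≤ x) (hxy : x ≤ y) :
    (y + B₁) * (y + B₂) * ((x + A₁) * (x + A₂)) ≤
      (x + B₁) * (x + B₂) * ((y + A₁) * (y + A₂)) := by
  have hy : 0 ≤ y := hx.trans hxy
  have hB₁ : 0 ≤ B₁ := hA₁.trans h1
  have hq : A₁ * A₂ ≤ B₁ * B₂ := by
    nlinarith [mul_nonneg (sub_nonneg.2 h1) (sub_nonneg.2 (h1.trans hB)),
      mul_nonneg hA₁ (sub_nonneg.2 h2)]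
  have hab : A₁ * B₁ ≤ A₂ * B₂ := mul_le_mul hA hB hB₁ (hA₁.trans hA)
  have hqr : (B₁ + B₂) * (A₁ * A₂) ≤ B₁ * B₂ * (A₁ + A₂) := by
    nlinarith [mul_nonneg (mul_nonneg hB₁ hA₁) (sub_nonneg.2 h2),
      mul_nonneg (sub_nonneg.2 h1) (sub_nonneg.2 hab)]
  have hG : 0 ≤ (B₁ + B₂ - (A₁ + A₂)) * (x * y) + (B₁ * B₂ - A₁ * A₂) * (x + y)
      + (B₁ * B₂ * (A₁ + A₂) - (B₁ + B₂) * (A₁ * A₂)) := by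
    have := mul_nonneg (sub_nonneg.2 h2) (mul_nonneg hx hy)
    have := mul_nonneg (sub_nonneg.2 hq) (add_nonneg hx hy)
    linarith
  nlinarith [mul_nonneg (sub_nonneg.2 hxy) hG]

/-- Alzer's monotonicity theorem (case `m = 2`): under the stated ordering
conditions, `x ↦ Γ(x+a₁)Γ(x+a₂)/(Γ(x+b₁)Γ(x+b₂))` is decreasing on `(0, ∞)`. -/
theorem statement7 (a₁ a₂ b₁ b₂ : ℝ) (ha₁ : 0 ≤ a₁) (ha : a₁ ≤ a₂) (hb₁ : 0 ≤ b₁)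
    (hb : b₁ ≤ b₂) (h1 : a₁ ≤ b₁) (h2 : a₁ + a₂ ≤ b₁ + b₂) :
    AntitoneOn
      (fun x : ℝ =>
        Real.Gamma (x + a₁) * Real.Gamma (x + a₂) /
          (Real.Gamma (x + b₁) * Real.Gamma (x + b₂)))
      (Set.Ioi 0) := by
  have ha₂ : 0 ≤ a₂ := ha₁.trans ha
  have hb₂ : 0 ≤ b₂ := hb₁.trans hb
  intro x hx y hy hxy
  simp only [Set.mem_Ioi] at hx hy
  have tend : ∀ z : ℝ, 0 < z →
      Tendsto (fun n => Real.GammaSeq (z + a₁) n * Real.GammaSeq (z + a₂) n /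
          (Real.GammaSeq (z + b₁) n * Real.GammaSeq (z + b₂) n)) atTop
        (𝓝 (Real.Gamma (z + a₁) * Real.Gamma (z + a₂) /
          (Real.Gamma (z + b₁) * Real.Gamma (z + b₂)))) := by
    intro z hz
    exact ((Real.GammaSeq_tendsto_Gamma _).mul (Real.GammaSeq_tendsto_Gamma _)).div
      ((Real.GammaSeq_tendsto_Gamma _).mul (Real.GammaSeq_tendsto_Gamma _))
      (ne_of_gt (mul_pos (Real.Gamma_pos_of_pos (by linarith))
        (Real.Gamma_pos_of_pos (by linarith))))
  refine le_of_tendsto_of_tendsto (tend y hy) (tend x hx) ?_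
  filter_upwards [eventually_ge_atTop 1] with n hn
  have hN : (0:ℝ) < n := by exact_mod_cast hn
  -- rewrite both sides in product form
  have hsimp : ∀ z : ℝ, 0 < z →
      Real.GammaSeq (z + a₁) n * Real.GammaSeq (z + a₂) n /
        (Real.GammaSeq (z + b₁) n * Real.GammaSeq (z + b₂) n)
      = ((n:ℝ) ^ a₁ * (n:ℝ) ^ a₂ / ((n:ℝ) ^ b₁ * (n:ℝ) ^ b₂)) *
        ((∏ j ∈ Finset.range (n+1), (z + b₁ + j)) * (∏ j ∈ Finset.range (n+1), (z + b₂ + j)) /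
         ((∏ j ∈ Finset.range (n+1), (z + a₁ + j)) *
          (∏ j ∈ Finset.range (n+1), (z + a₂ + j)))) := by
    intro z hz
    have hprod : ∀ c : ℝ, 0 ≤ c → (0:ℝ) < ∏ j ∈ Finset.range (n+1), (z + c + j) := by
      intro c hc
      refine Finset.prod_pos fun j _ => ?_
      have : (0:ℝ) ≤ j := j.cast_nonneg
      linarith
    have hpa₁ := (hprod a₁ ha₁).ne'
    have hpa₂ := (hprod a₂ ha₂).ne'
    have hpb₁ := (hprod b₁ hb₁).ne'
    have hpb₂ := (hprod b₂ hb₂).ne'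
    have hfac : ((n.factorial : ℝ)) ≠ 0 := by exact_mod_cast n.factorial_ne_zero
    have hpow : ∀ c : ℝ, ((n:ℝ) ^ c) ≠ 0 := fun c => (Real.rpow_pos_of_pos hN c).ne'
    simp only [Real.GammaSeq, Real.rpow_add hN]
    have e : ∀ c : ℝ, ∏ j ∈ Finset.range (n+1), (z + c + j)
        = ∏ j ∈ Finset.range (n+1), ((z + c) + j) := fun c => rfl
    field_simp
  rw [hsimp x hx, hsimp y hy]
  refine mul_le_mul_of_nonneg_left ?_ ?_
  · -- the ratio of products is antitone
    have hprod : ∀ (z c : ℝ), 0 < z → 0 ≤ c →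
        (0:ℝ) < ∏ j ∈ Finset.range (n+1), (z + c + j) := by
      intro z c hz hc
      refine Finset.prod_pos fun j _ => ?_
      have : (0:ℝ) ≤ j := j.cast_nonneg
      linarith
    rw [div_le_div_iff₀ (mul_pos (hprod y a₁ hy ha₁) (hprod y a₂ hy ha₂))
      (mul_pos (hprod x a₁ hx ha₁) (hprod x a₂ hx ha₂))]
    calc (∏ j ∈ Finset.range (n+1), (y + b₁ + j)) * (∏ j ∈ Finset.range (n+1), (y + b₂ + j)) *
          ((∏ j ∈ Finset.range (n+1), (x + a₁ + j)) * (∏ j ∈ Finset.range (n+1), (x + a₂ + j)))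
        = ∏ j ∈ Finset.range (n+1),
            ((y + b₁ + j) * (y + b₂ + j) * ((x + a₁ + j) * (x + a₂ + j))) := by
          simp [Finset.prod_mul_distrib]
      _ ≤ ∏ j ∈ Finset.range (n+1),
            ((x + b₁ + j) * (x + b₂ + j) * ((y + a₁ + j) * (y + a₂ + j))) := by
          refine Finset.prod_le_prod (fun j _ => ?_) (fun j _ => ?_)
          · have hj : (0:ℝ) ≤ j := j.cast_nonneg
            have h₁ : (0:ℝ) ≤ y + b₁ + j := by linarith
            have h₂ : (0:ℝ) ≤ y + b₂ + j := by linarith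
            have h₃ : (0:ℝ) ≤ x + a₁ + j := by linarith
            have h₄ : (0:ℝ) ≤ x + a₂ + j := by linarith
            exact mul_nonneg (mul_nonneg h₁ h₂) (mul_nonneg h₃ h₄)
          · have hj : (0:ℝ) ≤ j := j.cast_nonneg
            have := alzer_key (a₁ + j) (a₂ + j) (b₁ + j) (b₂ + j) x y
              (by linarith) (by linarith) (by linarith) (by linarith) (by linarith)
              hx.le hxy
            simpa [← add_assoc] using this
      _ = (∏ j ∈ Finset.range (n+1), (x + b₁ + j)) * (∏ j ∈ Finset.range (n+1), (x + b₂ + j)) *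
          ((∏ j ∈ Finset.range (n+1), (y + a₁ + j)) *
           (∏ j ∈ Finset.range (n+1), (y + a₂ + j))) := by
          simp [Finset.prod_mul_distrib]
  · have h₁ := Real.rpow_pos_of_pos hN a₁
    have h₂ := Real.rpow_pos_of_pos hN a₂
    have h₃ := Real.rpow_pos_of_pos hN b₁
    have h₄ := Real.rpow_pos_of_pos hN b₂
    positivity
end

section
/- For s ∈ (0,1) and δ ∈ [0, 1/2], the quantity G(s,δ) := (Γ(s+1)·Γ(3−s−δ/2)·Γ(1+δ/2)) / (Γ(3−s)·Γ(3−δ/2)·Γ(s+1+δ/2)) satisfies G(s,δ) ≤ 1/2. -/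
open Filter Finset Nat

/-- Per-factor elementary inequality. -/
lemma factor_ineq (s t j : ℝ) (hs0 : 0 < s) (hs1 : s < 1) (ht0 : 0 ≤ t) (ht1 : t ≤ 1/4)
    (hj : 0 ≤ j) :
    (1 + j) * (3 - t + j) * ((3 - s + j) * (s + 1 + t + j)) ≤
      (s + 1 + j) * (3 + j) * ((3 - s - t + j) * (1 + t + j)) := by
  have hA : (1 + t + j) * (s + 1 + j) ≤ (3 + j) * (3 - s - t + j) := by
    nlinarith [mul_nonneg hj (by linarith : (0:ℝ) ≤ 4 - 2*s - 2*t),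
      mul_nonneg hs0.le ht0]
  nlinarith [mul_nonneg (mul_nonneg hs0.le ht0) (sub_nonneg.2 hA), sq_nonneg (s*t)]

/-- Combining four `GammaSeq`s whose arguments sum to 8. -/
lemma gammaSeq_four (a b c d : ℝ) (h8 : a + b + (c + d) = 8) (n : ℕ) (hn : 0 < (n:ℝ)) :
    Real.GammaSeq a n * Real.GammaSeq b n * (Real.GammaSeq c n * Real.GammaSeq d n) =
      (n:ℝ) ^ (8:ℝ) * ((n ! : ℝ))^4 /
        ∏ j ∈ Finset.range (n + 1), ((a + j) * (b + j) * ((c + j) * (d + j))) := by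
  simp only [Real.GammaSeq]
  rw [_root_.div_mul_div_comm, _root_.div_mul_div_comm, _root_.div_mul_div_comm]
  congr 1
  · rw [show (n:ℝ) ^ a * ↑n ! * ((n:ℝ) ^ b * ↑n !) * ((n:ℝ) ^ c * ↑n ! * ((n:ℝ) ^ d * ↑n !))
        = (n:ℝ) ^ a * (n:ℝ) ^ b * ((n:ℝ) ^ c * (n:ℝ) ^ d) * (↑n !)^4 by ring,
      ← Real.rpow_add hn, ← Real.rpow_add hn, ← Real.rpow_add hn, h8]
  · rw [← Finset.prod_mul_distrib, ← Finset.prod_mul_distrib, ← Finset.prod_mul_distrib]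

/-- The Gamma-quotient `G(s,δ)` is at most `1/2` for `s ∈ (0,1)`, `δ ∈ [0,1/2]`. -/
theorem statement8 (s δ : ℝ) (hs : s ∈ Set.Ioo (0 : ℝ) 1) (hδ : δ ∈ Set.Icc (0 : ℝ) (1 / 2)) :
    Real.Gamma (s + 1) * Real.Gamma (3 - s - δ / 2) * Real.Gamma (1 + δ / 2) /
        (Real.Gamma (3 - s) * Real.Gamma (3 - δ / 2) * Real.Gamma (s + 1 + δ / 2)) ≤
      1 / 2 := by
  obtain ⟨hs0, hs1⟩ := hs
  obtain ⟨hδ0, hδ1⟩ := hδ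
  set t := δ / 2 with htdef
  have ht0 : 0 ≤ t := by simp only [htdef]; linarith
  have ht1 : t ≤ 1/4 := by simp only [htdef]; linarith
  have key : Real.Gamma (s + 1) * Real.Gamma 3 * (Real.Gamma (3 - s - t) * Real.Gamma (1 + t)) ≤
      Real.Gamma 1 * Real.Gamma (3 - t) * (Real.Gamma (3 - s) * Real.Gamma (s + 1 + t)) := by
    have hP := ((Real.GammaSeq_tendsto_Gamma (s + 1)).mul (Real.GammaSeq_tendsto_Gamma 3)).mul
      ((Real.GammaSeq_tendsto_Gamma (3 - s - t)).mul (Real.GammaSeq_tendsto_Gamma (1 + t)))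
    have hQ := ((Real.GammaSeq_tendsto_Gamma 1).mul (Real.GammaSeq_tendsto_Gamma (3 - t))).mul
      ((Real.GammaSeq_tendsto_Gamma (3 - s)).mul (Real.GammaSeq_tendsto_Gamma (s + 1 + t)))
    refine le_of_tendsto_of_tendsto hP hQ (Filter.eventually_atTop.2 ⟨1, fun n hn => ?_⟩)
    dsimp only
    have hn' : 0 < (n:ℝ) := by exact_mod_cast hn
    rw [gammaSeq_four (s+1) 3 (3-s-t) (1+t) (by ring) n hn',
        gammaSeq_four 1 (3-t) (3-s) (s+1+t) (by ring) n hn']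
    have hQpos : 0 < ∏ j ∈ Finset.range (n + 1),
        ((1 + (j:ℝ)) * (3 - t + j) * ((3 - s + j) * (s + 1 + t + j))) := by
      refine Finset.prod_pos fun j _ => ?_
      have hj : (0:ℝ) ≤ (j:ℝ) := j.cast_nonneg
      exact mul_pos (mul_pos (by linarith) (by linarith)) (mul_pos (by linarith) (by linarith))
    have hle : ∏ j ∈ Finset.range (n + 1),
        ((1 + (j:ℝ)) * (3 - t + j) * ((3 - s + j) * (s + 1 + t + j))) ≤
        ∏ j ∈ Finset.range (n + 1),
        ((s + 1 + (j:ℝ)) * (3 + j) * ((3 - s - t + j) * (1 + t + j))) := by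
      refine Finset.prod_le_prod (fun j _ => ?_) (fun j _ => ?_)
      · have hj : (0:ℝ) ≤ (j:ℝ) := j.cast_nonneg
        exact le_of_lt (mul_pos (mul_pos (by linarith) (by linarith))
          (mul_pos (by linarith) (by linarith)))
      · exact factor_ineq s t j hs0 hs1 ht0 ht1 j.cast_nonneg
    have hC : (0:ℝ) ≤ (n:ℝ) ^ (8:ℝ) * ((n ! : ℝ))^4 := by positivity
    exact div_le_div_of_nonneg_left hC hQpos hle |>.trans_eq rfl
  have h1 : Real.Gamma 1 = 1 := Real.Gamma_one
  have h3 : Real.Gamma 3 = 2 := by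
    rw [show (3:ℝ) = 2 + 1 by norm_num, Real.Gamma_add_one (by norm_num),
      show (2:ℝ) = 1 + 1 by norm_num, Real.Gamma_add_one (by norm_num), Real.Gamma_one]
    norm_num
  rw [h1, h3] at key
  have g1 : 0 < Real.Gamma (3 - s) := Real.Gamma_pos_of_pos (by linarith)
  have g2 : 0 < Real.Gamma (3 - t) := Real.Gamma_pos_of_pos (by linarith)
  have g3 : 0 < Real.Gamma (s + 1 + t) := Real.Gamma_pos_of_pos (by linarith)
  have g4 : 0 < Real.Gamma (s + 1) := Real.Gamma_pos_of_pos (by linarith)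
  have g5 : 0 < Real.Gamma (3 - s - t) := Real.Gamma_pos_of_pos (by linarith)
  have g6 : 0 < Real.Gamma (1 + t) := Real.Gamma_pos_of_pos (by linarith)
  rw [div_le_div_iff₀ (by positivity) (by norm_num : (0:ℝ) < 2)]
  nlinarith [key]
end

section
/- For s ∈ (0,1) and d ≥ 2, the function L(δ) := (Γ(2 + d/2 − s − δ/2)·Γ(1 + δ/2)) / (Γ(1 + d/2 − δ/2)·Γ(s + δ/2)) is strictly increasing in δ on [0, 1/2]. -/
open Filter Finset

/-- Core algebraic factor inequality. -/
lemma factor_lt' {t u v w : ℝ} (ht : 0 < t) (hv : 0 < v) (hw : 0 < w)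
    (h : v + w < u) :
    u * v / ((u + t) * (v + t)) < (u - w) * (v + w) / ((u - w + t) * (v + w + t)) := by
  have h1 : 0 < u - w := by linarith
  have h2 : 0 < u := by linarith
  rw [div_lt_div_iff₀ (by positivity) (by positivity)]
  nlinarith [mul_pos (mul_pos hw (show (0:ℝ) < u - v - w by linarith))
      (mul_pos ht (show (0:ℝ) < u + v + t by linarith))]

/-- The Gamma quotient as a function of the parameters. -/
noncomputable def Fq (c e t x : ℝ) : ℝ :=
  Real.Gamma (c + t - x) * Real.Gamma (e + t + x) /
    (Real.Gamma (c - x) * Real.Gamma (e + x))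

lemma prod_pos_aux {a : ℝ} (ha : 0 < a) (n : ℕ) :
    0 < ∏ j ∈ Finset.range (n + 1), (a + (j : ℝ)) :=
  Finset.prod_pos fun j _ => by positivity

lemma gammaSeq_quot_eq {c e t x : ℝ} (hc : 0 < c - x) (he : 0 < e + x) (ht : 0 < t)
    {n : ℕ} (hn : 1 ≤ n) :
    Real.GammaSeq (c + t - x) n * Real.GammaSeq (e + t + x) n /
      (Real.GammaSeq (c - x) n * Real.GammaSeq (e + x) n) =
    (n : ℝ) ^ (2 * t) * ∏ j ∈ Finset.range (n + 1),
      ((c - x + j) * (e + x + j) / ((c + t - x + j) * (e + t + x + j))) := by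
  have hN : (0 : ℝ) < n := by exact_mod_cast hn
  have ha : 0 < c + t - x := by linarith
  have hb : 0 < e + t + x := by linarith
  have hPA := prod_pos_aux ha n
  have hPB := prod_pos_aux hb n
  have hPC := prod_pos_aux hc n
  have hPD := prod_pos_aux he n
  have hfact : (0 : ℝ) < (Nat.factorial n : ℝ) := by exact_mod_cast n.factorial_pos
  have hpow : (n : ℝ) ^ (c + t - x) * (n : ℝ) ^ (e + t + x) =
      (n : ℝ) ^ (2 * t) * ((n : ℝ) ^ (c - x) * (n : ℝ) ^ (e + x)) := by
    rw [← Real.rpow_add hN, ← Real.rpow_add hN, ← Real.rpow_add hN]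
    ring_nf
  have hprod : ∏ j ∈ Finset.range (n + 1),
      ((c - x + j) * (e + x + j) / ((c + t - x + j) * (e + t + x + j))) =
      ((∏ j ∈ Finset.range (n + 1), (c - x + j)) *
        ∏ j ∈ Finset.range (n + 1), (e + x + j)) /
      ((∏ j ∈ Finset.range (n + 1), (c + t - x + j)) *
        ∏ j ∈ Finset.range (n + 1), (e + t + x + j)) := by
    rw [Finset.prod_div_distrib, Finset.prod_mul_distrib, Finset.prod_mul_distrib]
  have h1 : Real.GammaSeq (c + t - x) n * Real.GammaSeq (e + t + x) n /
      (Real.GammaSeq (c - x) n * Real.GammaSeq (e + x) n) =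
      ((n : ℝ) ^ (c + t - x) * (n : ℝ) ^ (e + t + x)) /
        ((n : ℝ) ^ (c - x) * (n : ℝ) ^ (e + x)) *
      (((∏ j ∈ Finset.range (n + 1), (c - x + j)) *
        ∏ j ∈ Finset.range (n + 1), (e + x + j)) /
      ((∏ j ∈ Finset.range (n + 1), (c + t - x + j)) *
        ∏ j ∈ Finset.range (n + 1), (e + t + x + j))) := by
    rw [Real.GammaSeq, Real.GammaSeq, Real.GammaSeq, Real.GammaSeq]
    have p1 : (0:ℝ) < (n : ℝ) ^ (c + t - x) := Real.rpow_pos_of_pos hN _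
    have p2 : (0:ℝ) < (n : ℝ) ^ (e + t + x) := Real.rpow_pos_of_pos hN _
    have p3 : (0:ℝ) < (n : ℝ) ^ (c - x) := Real.rpow_pos_of_pos hN _
    have p4 : (0:ℝ) < (n : ℝ) ^ (e + x) := Real.rpow_pos_of_pos hN _
    field_simp
  have h2 : ((n : ℝ) ^ (c + t - x) * (n : ℝ) ^ (e + t + x)) /
      ((n : ℝ) ^ (c - x) * (n : ℝ) ^ (e + x)) = (n : ℝ) ^ (2 * t) := by
    rw [hpow, mul_div_assoc, div_self (by positivity), mul_one]
  rw [h1, h2, hprod]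

lemma Fq_le {c e t x₁ x₂ : ℝ} (ht : 0 < t) (he : 0 < e + x₁) (hx : x₁ < x₂)
    (hce : x₁ + x₂ < c - e) : Fq c e t x₁ ≤ Fq c e t x₂ := by
  have he2 : 0 < e + x₂ := by linarith
  have hc2 : 0 < c - x₂ := by linarith
  have hc1 : 0 < c - x₁ := by linarith
  have lim : ∀ x : ℝ, 0 < c - x → 0 < e + x →
      Tendsto (fun n => Real.GammaSeq (c + t - x) n * Real.GammaSeq (e + t + x) n /
        (Real.GammaSeq (c - x) n * Real.GammaSeq (e + x) n)) atTop (nhds (Fq c e t x)) := by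
    intro x hcx hex
    exact ((Real.GammaSeq_tendsto_Gamma _).mul (Real.GammaSeq_tendsto_Gamma _)).div
      ((Real.GammaSeq_tendsto_Gamma _).mul (Real.GammaSeq_tendsto_Gamma _))
      (mul_ne_zero (Real.Gamma_pos_of_pos hcx).ne' (Real.Gamma_pos_of_pos hex).ne')
  refine le_of_tendsto_of_tendsto (lim x₁ hc1 he) (lim x₂ hc2 he2) ?_
  filter_upwards [eventually_ge_atTop 1] with n hn
  rw [gammaSeq_quot_eq hc1 he ht hn, gammaSeq_quot_eq hc2 he2 ht hn]
  have hN : (0 : ℝ) ≤ (n : ℝ) ^ (2 * t) := by positivity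
  refine mul_le_mul_of_nonneg_left ?_ hN
  refine Finset.prod_le_prod (fun j _ => ?_) (fun j _ => ?_)
  · have hj : (0:ℝ) ≤ (j : ℝ) := j.cast_nonneg
    have h1 : 0 < c - x₁ + (j : ℝ) := by linarith
    have h2 : 0 < e + x₁ + (j : ℝ) := by linarith
    have h3 : 0 < c + t - x₁ + (j : ℝ) := by linarith
    have h4 : 0 < e + t + x₁ + (j : ℝ) := by linarith
    exact (div_pos (mul_pos h1 h2) (mul_pos h3 h4)).le
  · have hj : (0:ℝ) ≤ (j : ℝ) := j.cast_nonneg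
    have key := factor_lt' (t := t) (u := c - x₁ + j) (v := e + x₁ + j) (w := x₂ - x₁)
      ht (by linarith) (by linarith) (by linarith)
    have e5 : c - x₁ + (j : ℝ) - (x₂ - x₁) + t = c + t - x₂ + j := by ring
    have e6 : e + x₁ + (j : ℝ) + (x₂ - x₁) + t = e + t + x₂ + j := by ring
    have e1 : c - x₁ + (j : ℝ) - (x₂ - x₁) = c - x₂ + j := by ring
    have e2 : e + x₁ + (j : ℝ) + (x₂ - x₁) = e + x₂ + j := by ring
    have e3 : c - x₁ + (j : ℝ) + t = c + t - x₁ + j := by ring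
    have e4 : e + x₁ + (j : ℝ) + t = e + t + x₁ + j := by ring
    rw [e5, e6, e1, e2, e3, e4] at key
    exact key.le

lemma Fq_recurrence {c e t x : ℝ} (ha : 0 < c + t - x) (hb : 0 < e + t + x)
    (hc : 0 < c - x) (he : 0 < e + x) :
    Fq c e t x = ((c - x) * (e + x) / ((c + t - x) * (e + t + x))) * Fq (c + 1) (e + 1) t x := by
  unfold Fq
  have g1 : Real.Gamma (c + 1 + t - x) = (c + t - x) * Real.Gamma (c + t - x) := by
    rw [show c + 1 + t - x = c + t - x + 1 by ring, Real.Gamma_add_one ha.ne']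
  have g2 : Real.Gamma (e + 1 + t + x) = (e + t + x) * Real.Gamma (e + t + x) := by
    rw [show e + 1 + t + x = e + t + x + 1 by ring, Real.Gamma_add_one hb.ne']
  have g3 : Real.Gamma (c + 1 - x) = (c - x) * Real.Gamma (c - x) := by
    rw [show c + 1 - x = c - x + 1 by ring, Real.Gamma_add_one hc.ne']
  have g4 : Real.Gamma (e + 1 + x) = (e + x) * Real.Gamma (e + x) := by
    rw [show e + 1 + x = e + x + 1 by ring, Real.Gamma_add_one he.ne']
  rw [g1, g2, g3, g4]
  have G1 := Real.Gamma_pos_of_pos ha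
  have G2 := Real.Gamma_pos_of_pos hb
  have G3 := Real.Gamma_pos_of_pos hc
  have G4 := Real.Gamma_pos_of_pos he
  field_simp

lemma Fq_lt {c e t x₁ x₂ : ℝ} (ht : 0 < t) (he : 0 < e + x₁) (hx : x₁ < x₂)
    (hce : x₁ + x₂ < c - e) : Fq c e t x₁ < Fq c e t x₂ := by
  have he2 : 0 < e + x₂ := by linarith
  have hc2 : 0 < c - x₂ := by linarith
  have hc1 : 0 < c - x₁ := by linarith
  have ha1 : 0 < c + t - x₁ := by linarith
  have ha2 : 0 < c + t - x₂ := by linarith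
  have hb1 : 0 < e + t + x₁ := by linarith
  have hb2 : 0 < e + t + x₂ := by linarith
  rw [Fq_recurrence ha1 hb1 hc1 he, Fq_recurrence ha2 hb2 hc2 he2]
  have hFpos : ∀ x : ℝ, 0 < c + t - x → 0 < e + t + x → 0 < c - x → 0 < e + x →
      0 < Fq (c + 1) (e + 1) t x := by
    intro x h1 h2 h3 h4
    unfold Fq
    have i1 := Real.Gamma_pos_of_pos (show (0:ℝ) < c + 1 + t - x by linarith)
    have i2 := Real.Gamma_pos_of_pos (show (0:ℝ) < e + 1 + t + x by linarith)
    have i3 := Real.Gamma_pos_of_pos (show (0:ℝ) < c + 1 - x by linarith)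
    have i4 := Real.Gamma_pos_of_pos (show (0:ℝ) < e + 1 + x by linarith)
    positivity
  have hF1 := hFpos x₁ ha1 hb1 hc1 he
  have hF2 := hFpos x₂ ha2 hb2 hc2 he2
  have hFle : Fq (c + 1) (e + 1) t x₁ ≤ Fq (c + 1) (e + 1) t x₂ :=
    Fq_le ht (by linarith) hx (by linarith)
  have key := factor_lt' (t := t) (u := c - x₁) (v := e + x₁) (w := x₂ - x₁)
    ht he (by linarith) (by linarith)
  have e5 : c - x₁ - (x₂ - x₁) + t = c + t - x₂ := by ring
  have e6 : e + x₁ + (x₂ - x₁) + t = e + t + x₂ := by ring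
  have e1 : c - x₁ - (x₂ - x₁) = c - x₂ := by ring
  have e2 : e + x₁ + (x₂ - x₁) = e + x₂ := by ring
  have e3 : c - x₁ + t = c + t - x₁ := by ring
  have e4 : e + x₁ + t = e + t + x₁ := by ring
  rw [e5, e6, e1, e2, e3, e4] at key
  have hg2 : 0 < (c - x₂) * (e + x₂) / ((c + t - x₂) * (e + t + x₂)) := by positivity
  calc (c - x₁) * (e + x₁) / ((c + t - x₁) * (e + t + x₁)) * Fq (c + 1) (e + 1) t x₁
      < (c - x₂) * (e + x₂) / ((c + t - x₂) * (e + t + x₂)) * Fq (c + 1) (e + 1) t x₁ :=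
        mul_lt_mul_of_pos_right key hF1
    _ ≤ (c - x₂) * (e + x₂) / ((c + t - x₂) * (e + t + x₂)) * Fq (c + 1) (e + 1) t x₂ :=
        mul_le_mul_of_nonneg_left hFle hg2.le

/-- The Gamma-quotient `L(δ)` is strictly increasing on `[0, 1/2]`. -/
theorem statement11 (d : ℕ) (hd : 2 ≤ d) (s : ℝ) (hs : s ∈ Set.Ioo (0 : ℝ) 1) :
    StrictMonoOn
      (fun δ : ℝ =>
        Real.Gamma (2 + (d : ℝ) / 2 - s - δ / 2) * Real.Gamma (1 + δ / 2) /
          (Real.Gamma (1 + (d : ℝ) / 2 - δ / 2) * Real.Gamma (s + δ / 2)))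
      (Set.Icc 0 (1 / 2)) := by
  obtain ⟨hs0, hs1⟩ := hs
  intro δ1 h1 δ2 h2 h12
  obtain ⟨h1a, h1b⟩ := Set.mem_Icc.mp h1
  obtain ⟨h2a, h2b⟩ := Set.mem_Icc.mp h2
  simp only
  have hd2 : (2 : ℝ) ≤ (d : ℝ) := by exact_mod_cast hd
  have key : Fq (1 + (d : ℝ) / 2) s (1 - s) (δ1 / 2) < Fq (1 + (d : ℝ) / 2) s (1 - s) (δ2 / 2) :=
    Fq_lt (by linarith) (by linarith) (by linarith) (by linarith)
  unfold Fq at key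
  have r1 : 1 + (d : ℝ) / 2 + (1 - s) - δ1 / 2 = 2 + (d : ℝ) / 2 - s - δ1 / 2 := by ring
  have r2 : s + (1 - s) + δ1 / 2 = 1 + δ1 / 2 := by ring
  have r3 : 1 + (d : ℝ) / 2 + (1 - s) - δ2 / 2 = 2 + (d : ℝ) / 2 - s - δ2 / 2 := by ring
  have r4 : s + (1 - s) + δ2 / 2 = 1 + δ2 / 2 := by ring
  rw [r1, r2, r3, r4] at key
  exact key
end

section
/- Let d ≥ 2, s ∈ (0,1), and define R(d) := (Γ(d/2)/Γ(d/2 − s + 1)) · (Γ(d/2 − s − δ/2 + 2)/Γ(d/2 − δ/2 + 1)) for fixed s ∈ (0,1) and δ ∈ [0, 1/2]. Then R(d) ≥ 1 for all d ≥ 2. -/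
/-- Log-convexity product inequality for Gamma: if `0 < a`, `a ≤ c ≤ b` and
`c + e = a + b`, then `Γ c * Γ e ≤ Γ a * Γ b`. -/
lemma gamma_prod_le (a b c e : ℝ) (ha : 0 < a) (hab : a < b) (hac : a ≤ c) (hcb : c ≤ b)
    (hsum : c + e = a + b) :
    Real.Gamma c * Real.Gamma e ≤ Real.Gamma a * Real.Gamma b := by
  set t : ℝ := (b - c) / (b - a) with ht
  have hba : (0:ℝ) < b - a := by linarith
  have ht0 : 0 ≤ t := div_nonneg (by linarith) hba.le
  have ht1 : t ≤ 1 := by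
    rw [ht, div_le_one hba]; linarith
  have hc : c = t * a + (1 - t) * b := by
    rw [ht, div_mul_eq_mul_div, one_sub_div hba.ne', div_mul_eq_mul_div, ← add_div,
      eq_div_iff hba.ne']; ring
  have he : e = (1 - t) * a + t * b := by
    have : e = a + b - c := by linarith
    rw [this, hc]; ring
  have hb : (0:ℝ) < b := ha.trans hab
  have hcpos : (0:ℝ) < c := lt_of_lt_of_le ha hac
  have hepos : (0:ℝ) < e := by nlinarith [he, mul_nonneg ht0 ha.le, mul_nonneg (by linarith : (0:ℝ) ≤ 1 - t) ha.le]
  have hconv := Real.convexOn_log_Gamma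
  have h1 : Real.log (Real.Gamma c) ≤
      t * Real.log (Real.Gamma a) + (1 - t) * Real.log (Real.Gamma b) := by
    have := hconv.2 (Set.mem_Ioi.2 ha) (Set.mem_Ioi.2 hb) ht0
      (by linarith : (0:ℝ) ≤ 1 - t) (by ring : t + (1 - t) = 1)
    simp only [Function.comp, smul_eq_mul] at this
    rwa [← hc] at this
  have h2 : Real.log (Real.Gamma e) ≤
      (1 - t) * Real.log (Real.Gamma a) + t * Real.log (Real.Gamma b) := by
    have := hconv.2 (Set.mem_Ioi.2 ha) (Set.mem_Ioi.2 hb)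
      (by linarith : (0:ℝ) ≤ 1 - t) ht0 (by ring : (1 - t) + t = 1)
    simp only [Function.comp, smul_eq_mul] at this
    rwa [← he] at this
  have hGa := Real.Gamma_pos_of_pos ha
  have hGb := Real.Gamma_pos_of_pos hb
  have hGc := Real.Gamma_pos_of_pos hcpos
  have hGe := Real.Gamma_pos_of_pos hepos
  have hlog : Real.log (Real.Gamma c * Real.Gamma e) ≤ Real.log (Real.Gamma a * Real.Gamma b) := by
    rw [Real.log_mul hGc.ne' hGe.ne', Real.log_mul hGa.ne' hGb.ne']
    nlinarith
  exact (Real.log_le_log_iff (by positivity) (by positivity)).mp hlog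

/-- The Gamma-quotient `R(d)` is at least `1` for all `d ≥ 2`. -/
theorem statement13 (d : ℕ) (hd : 2 ≤ d) (s δ : ℝ) (hs : s ∈ Set.Ioo (0 : ℝ) 1)
    (hδ : δ ∈ Set.Icc (0 : ℝ) (1 / 2)) :
    1 ≤ Real.Gamma ((d : ℝ) / 2) / Real.Gamma ((d : ℝ) / 2 - s + 1) *
        (Real.Gamma ((d : ℝ) / 2 - s - δ / 2 + 2) / Real.Gamma ((d : ℝ) / 2 - δ / 2 + 1)) := by
  obtain ⟨hs0, hs1⟩ := hs
  obtain ⟨hδ0, hδ1⟩ := hδ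
  set x : ℝ := (d : ℝ) / 2 with hx
  have hx1 : (1:ℝ) ≤ x := by
    rw [hx]
    have : (2:ℝ) ≤ (d:ℝ) := by exact_mod_cast hd
    linarith
  have hxpos : (0:ℝ) < x := by linarith
  have key : Real.Gamma (x - s + 1) * Real.Gamma (x - δ / 2 + 1) ≤
      Real.Gamma x * Real.Gamma (x - s - δ / 2 + 2) := by
    rcases le_or_gt (x - s + 1) (x - δ / 2 + 1) with h | h
    · exact gamma_prod_le x (x - s - δ / 2 + 2) (x - s + 1) (x - δ / 2 + 1) hxpos
        (by linarith) (by linarith) (by linarith) (by ring)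
    · rw [mul_comm (Real.Gamma (x - s + 1))]
      exact gamma_prod_le x (x - s - δ / 2 + 2) (x - δ / 2 + 1) (x - s + 1) hxpos
        (by linarith) (by linarith) (by linarith) (by ring)
  have h1 : (0:ℝ) < Real.Gamma (x - s + 1) := Real.Gamma_pos_of_pos (by linarith)
  have h2 : (0:ℝ) < Real.Gamma (x - δ / 2 + 1) := Real.Gamma_pos_of_pos (by linarith)
  rw [div_mul_div_comm, le_div_iff₀ (by positivity), one_mul]
  exact key
end
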